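/- Let R be a valuation domain with maximal ideal m and prime ideals p ⊆ q. There is a short exact sequence of R-modules 0 → R_q/p → κ(q) ⊕ κ(p) → R_p/q → 0, where κ(p) = R_p/p and κ(q) = R_q/q are the residue fields, the first map is given by the canonical projection R_q/p → R_q/q and the canonical inclusion R_q/p → R_p/p, and the second map is the difference of the canonical maps. -/

import Mathlib

section aux
variable {R : Type} [CommRing R] [IsDomain R]

/-- In a valuation domain, every element of the extension of a prime `P` to `R_P`
is the image of an element of `P`. -/
lemma val_loc_key (hchain : ∀ I J : Ideal R, I ≤ J ∨ J ≤ I)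
    (P : Ideal R) [P.IsPrime] (z : Localization.AtPrime P)
    (hz : z ∈ Ideal.map (algebraMap R (Localization.AtPrime P)) P) :
    ∃ b ∈ P, algebraMap R (Localization.AtPrime P) b = z := by
  obtain ⟨⟨a, s⟩, h⟩ := (IsLocalization.mem_map_algebraMap_iff P.primeCompl _).mp hz
  rcases hchain (Ideal.span {(a : R)}) (Ideal.span {(s : R)}) with hd | hd
  · -- s ∣ a
    obtain ⟨b, hb⟩ := Ideal.span_singleton_le_span_singleton.mp hd
    have haP : (a : R) ∈ P := a.2
    rw [hb] at haP
    have hbP : b ∈ P := by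
      rcases ‹P.IsPrime›.mem_or_mem haP with h1 | h1
      · exact absurd h1 s.2
      · exact h1
    refine ⟨b, hbP, ?_⟩
    have hu : IsUnit (algebraMap R (Localization.AtPrime P) (s : R)) :=
      IsLocalization.map_units _ s
    apply hu.mul_left_cancel
    rw [mul_comm _ z, h, hb, map_mul, mul_comm]
  · -- a ∣ s
    obtain ⟨c, hc⟩ := Ideal.span_singleton_le_span_singleton.mp hd
    exact absurd (hc ▸ Ideal.mul_mem_right c P a.2) s.2

end aux

set_option maxHeartbeats 2000000 in
/-- Over a valuation domain with primes `p ⊆ q`, there is a short exact sequence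
`0 → R_q/p → κ(q) ⊕ κ(p) → R_p/q → 0`, where the first map is given by the canonical
projection and the canonical inclusion, and the second map is the difference of the
canonical maps. -/
theorem exact_seq_loc_quot_residue
    {R : Type} [CommRing R] [IsDomain R]
    (hchain : ∀ I J : Ideal R, I ≤ J ∨ J ≤ I)
    (m : Ideal R) (hm : m.IsMaximal)
    (p q : Ideal R) (hp : p.IsPrime) (hq : q.IsPrime) (hpq : p ≤ q) :
    ∃ (f : ((Localization.AtPrime q) ⧸
              Submodule.map (Algebra.linearMap R (Localization.AtPrime q)) p) →ₗ[R]
           (((Localization.AtPrime q) ⧸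
              (Ideal.map (algebraMap R (Localization.AtPrime q)) q).restrictScalars R) ×
            ((Localization.AtPrime p) ⧸
              (Ideal.map (algebraMap R (Localization.AtPrime p)) p).restrictScalars R)))
      (g : (((Localization.AtPrime q) ⧸
              (Ideal.map (algebraMap R (Localization.AtPrime q)) q).restrictScalars R) ×
            ((Localization.AtPrime p) ⧸
              (Ideal.map (algebraMap R (Localization.AtPrime p)) p).restrictScalars R)) →ₗ[R]
           ((Localization.AtPrime p) ⧸
              Submodule.map (Algebra.linearMap R (Localization.AtPrime p)) q)),
      Function.Injective f ∧ Function.Exact f g ∧ Function.Surjective g ∧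
      (∀ x : Localization.AtPrime q,
        f (Submodule.Quotient.mk x) =
          (Submodule.Quotient.mk x,
           Submodule.Quotient.mk
             (IsLocalization.map (M := q.primeCompl) (T := p.primeCompl)
               (S := Localization.AtPrime q) (Localization.AtPrime p) (RingHom.id R)
               (by intro x hx; simp only [Submonoid.mem_comap, RingHom.id_apply]
                   exact fun hmem => hx (hpq hmem)) x))) ∧
      (∀ (x : Localization.AtPrime q) (y : Localization.AtPrime p),
        g (Submodule.Quotient.mk x, Submodule.Quotient.mk y) =
          Submodule.Quotient.mk
            (IsLocalization.map (M := q.primeCompl) (T := p.primeCompl)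
              (S := Localization.AtPrime q) (Localization.AtPrime p) (RingHom.id R)
              (by intro x hx; simp only [Submonoid.mem_comap, RingHom.id_apply]
                  exact fun hmem => hx (hpq hmem)) x) -
          Submodule.Quotient.mk y) := by
  haveI := hp; haveI := hq
  set Lq := Localization.AtPrime q with hLq
  set Lp := Localization.AtPrime p with hLp
  have hle : q.primeCompl ≤ p.primeCompl.comap (RingHom.id R) := by
    intro x hx
    simp only [Submonoid.mem_comap, RingHom.id_apply]
    exact fun hmem => hx (hpq hmem)
  set φ : Lq →+* Lp :=
    IsLocalization.map (M := q.primeCompl) (T := p.primeCompl) Lp (RingHom.id R) hle with hφ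
  have hφalg : ∀ r : R, φ (algebraMap R Lq r) = algebraMap R Lp r := fun r =>
    IsLocalization.map_eq hle r
  have hφinj : Function.Injective φ := by
    intro z w hzw
    have h0 : φ (z - w) = 0 := by rw [map_sub, hzw, sub_self]
    obtain ⟨⟨a, s⟩, hmk : IsLocalization.mk' Lq a s = z - w⟩ := IsLocalization.mk'_surjective q.primeCompl (z - w)
    rw [← hmk, IsLocalization.map_mk'] at h0
    obtain ⟨t, ht⟩ := (IsLocalization.mk'_eq_zero_iff _ _).mp h0
    have htne : (t : R) ≠ 0 := fun h => t.2 (h ▸ p.zero_mem)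
    have ha : a = 0 := by
      simpa [RingHom.id_apply, htne] using mul_eq_zero.mp ht
    rw [ha, IsLocalization.mk'_zero] at hmk
    exact sub_eq_zero.mp hmk.symm
  -- R-linear version of φ
  set φₗ : Lq →ₗ[R] Lp :=
    { toFun := φ
      map_add' := map_add φ
      map_smul' := by
        intro r x
        simp only [RingHom.id_apply, Algebra.smul_def, map_mul, hφalg] } with hφₗ
  set Mq := (Ideal.map (algebraMap R Lq) q).restrictScalars R with hMq
  set Mp := (Ideal.map (algebraMap R Lp) p).restrictScalars R with hMp
  set Np := Submodule.map (Algebra.linearMap R Lq) p with hNp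
  set Nq := Submodule.map (Algebra.linearMap R Lp) q with hNq
  -- the map F : Lq → κ(q) × κ(p)
  set F : Lq →ₗ[R] (Lq ⧸ Mq) × (Lp ⧸ Mp) := LinearMap.prod Mq.mkQ (Mp.mkQ ∘ₗ φₗ) with hF
  have hFker : Np ≤ LinearMap.ker F := by
    rintro _ ⟨a, ha, rfl⟩
    simp only [LinearMap.mem_ker, hF, LinearMap.prod_apply, Function.prod, LinearMap.comp_apply,
      Submodule.mkQ_apply, Prod.mk_eq_zero, Submodule.Quotient.mk_eq_zero]
    constructor
    · exact Ideal.mem_map_of_mem _ (hpq ha)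
    · show φ (algebraMap R Lq a) ∈ Mp
      rw [hφalg]
      exact Ideal.mem_map_of_mem _ ha
  set f : (Lq ⧸ Np) →ₗ[R] (Lq ⧸ Mq) × (Lp ⧸ Mp) := Np.liftQ F hFker with hf
  -- first component of g
  have hg1ker : Mq ≤ LinearMap.ker (Nq.mkQ ∘ₗ φₗ) := by
    intro x hx
    obtain ⟨b, hb, hb2⟩ := val_loc_key hchain q x hx
    simp only [LinearMap.mem_ker, LinearMap.comp_apply, Submodule.mkQ_apply,
      Submodule.Quotient.mk_eq_zero]
    show φ x ∈ Nq
    rw [← hb2, hφalg]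
    exact ⟨b, hb, rfl⟩
  set g1 : (Lq ⧸ Mq) →ₗ[R] Lp ⧸ Nq := Mq.liftQ (Nq.mkQ ∘ₗ φₗ) hg1ker with hg1
  have hg2ker : Mp ≤ LinearMap.ker (-Nq.mkQ) := by
    intro y hy
    obtain ⟨b, hb, hb2⟩ := val_loc_key hchain p y hy
    simp only [LinearMap.mem_ker, LinearMap.neg_apply, Submodule.mkQ_apply, neg_eq_zero,
      Submodule.Quotient.mk_eq_zero]
    exact ⟨b, hpq hb, hb2⟩
  set g2 : (Lp ⧸ Mp) →ₗ[R] Lp ⧸ Nq := Mp.liftQ (-Nq.mkQ) hg2ker with hg2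
  set g : ((Lq ⧸ Mq) × (Lp ⧸ Mp)) →ₗ[R] Lp ⧸ Nq := g1.coprod g2 with hg
  have hfmk : ∀ x : Lq, f (Submodule.Quotient.mk x) =
      (Submodule.Quotient.mk x, Submodule.Quotient.mk (φ x)) := fun x => rfl
  have hgmk : ∀ (x : Lq) (y : Lp), g (Submodule.Quotient.mk x, Submodule.Quotient.mk y) =
      Submodule.Quotient.mk (φ x) - Submodule.Quotient.mk y := by
    intro x y
    rw [sub_eq_add_neg]
    rfl
  refine ⟨f, g, ?_, ?_, ?_, ?_, ?_⟩
  · -- injectivity of f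
    rw [← LinearMap.ker_eq_bot]
    apply Submodule.ker_liftQ_eq_bot
    intro x hx
    simp only [LinearMap.mem_ker, hF, LinearMap.prod_apply, Function.prod, LinearMap.comp_apply,
      Submodule.mkQ_apply, Prod.mk_eq_zero, Submodule.Quotient.mk_eq_zero] at hx
    obtain ⟨hx1, hx2⟩ := hx
    obtain ⟨b, hb, hb2⟩ := val_loc_key hchain p (φₗ x) hx2
    have : φ (algebraMap R Lq b) = φ x := by rw [hφalg]; exact hb2
    exact ⟨b, hb, hφinj this⟩
  · -- exactness
    rintro ⟨xq, yq⟩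
    obtain ⟨x, rfl⟩ := Submodule.Quotient.mk_surjective _ xq
    obtain ⟨y, rfl⟩ := Submodule.Quotient.mk_surjective _ yq
    constructor
    · intro h0
      rw [hgmk] at h0
      have h0' : Submodule.Quotient.mk (p := Nq) (φ x - y) = 0 := by
        rw [Submodule.Quotient.mk_sub]; exact h0
      rw [Submodule.Quotient.mk_eq_zero] at h0'
      obtain ⟨c, hc, hc2⟩ := h0'
      refine ⟨Submodule.Quotient.mk (x - algebraMap R Lq c), ?_⟩
      rw [hfmk, Prod.mk.injEq]
      constructor
      · rw [Submodule.Quotient.mk_sub, sub_eq_self, Submodule.Quotient.mk_eq_zero]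
        exact Ideal.mem_map_of_mem _ hc
      · have h4 : φ (x - algebraMap R Lq c) = y := by
          rw [map_sub, hφalg]
          have h3 : algebraMap R Lp c = φ x - y := hc2
          rw [h3]; ring
        rw [h4]
    · rintro ⟨a, ha⟩
      obtain ⟨x', rfl⟩ := Submodule.Quotient.mk_surjective _ a
      rw [hfmk, Prod.mk.injEq] at ha
      obtain ⟨ha1, ha2⟩ := ha
      rw [← ha1, ← ha2, hgmk, sub_self]
  · -- surjectivity of g
    intro z
    obtain ⟨w, rfl⟩ := Submodule.Quotient.mk_surjective _ z
    refine ⟨(Submodule.Quotient.mk 0, Submodule.Quotient.mk (-w)), ?_⟩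
    rw [hgmk, map_zero, Submodule.Quotient.mk_neg]
    simp only [Submodule.Quotient.mk_zero, zero_sub, neg_neg]
  · -- formula for f
    exact hfmk
  · -- formula for g
    exact hgmk
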